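/- arXiv:2006.10697 — 8 statements merged into one kernel-verified Lean document; each statement's English description precedes it below -/
import Mathlib

section
/- The only spoof perfect factorization with a single base is 1^1; that is, if x is an integer and a is a positive integer with 1 + x + x^2 + ... + x^a = 2·x^a, then x = 1 and a = 1. -/
theorem stmt_0 (x : ℤ) (a : ℕ) (ha : 1 ≤ a)
    (h : ∑ j ∈ Finset.range (a + 1), x ^ j = 2 * x ^ a) :
    x = 1 ∧ a = 1 := by
  have key : x ^ a * (x - 2) = -1 := by
    have h2 := congrArg (· * (x - 1)) h
    simp only [geom_sum_mul] at h2
    ring_nf at h2 ⊢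
    linarith [h2]
  have hunit : IsUnit (x ^ a) :=
    isUnit_of_mul_isUnit_left (y := x - 2) (by rw [key]; exact isUnit_one.neg)
  have hx : x ^ a = 1 ∨ x ^ a = -1 := Int.isUnit_iff.mp hunit
  have hx1 : x = 1 := by
    rcases hx with h1 | h1
    · rw [h1, one_mul] at key; omega
    · rw [h1] at key
      have hx3 : x = 3 := by omega
      rw [hx3] at h1
      have : (0:ℤ) < 3 ^ a := pow_pos (by norm_num) a
      omega
  subst hx1
  refine ⟨rfl, ?_⟩
  simp [Finset.sum_const, one_pow] at h
  omega
end

section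
/- If x^a · y^b is a nontrivial spoof perfect factorization with two bases satisfying x ≤ y, then either x = 2 and y = 2^(a+1) - 1 with b = 1, or (x,y,a,b) is one of the sporadic solutions (-2, 1, 1, 3) or (-3, 1, 1, 2). -/
open Finset

lemma coprime_geom (x : ℤ) (n : ℕ) : IsCoprime (∑ j ∈ range (n+1), x^j) x :=
  ⟨1, -(∑ j ∈ range n, x^j), by rw [geom_sum_succ]; ring⟩

lemma geom_lb {y : ℤ} (hy : 0 ≤ y) (n : ℕ) (hn : 1 ≤ n) : 1 ≤ ∑ j ∈ range n, y^j := by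
  have := Finset.single_le_sum (f := fun j => y^j) (fun i _ => pow_nonneg hy i)
    (Finset.mem_range.2 (by omega : 0 < n))
  simpa using this

lemma geom_ub {y : ℤ} (hy : 2 ≤ y) (n : ℕ) : (∑ j ∈ range (n+1), y^j) < 2 * y^n := by
  have h1 : (∑ j ∈ range (n+1), y^j) * (y - 1) = y^(n+1) - 1 := geom_sum_mul y (n+1)
  have h2 : y^(n+1) = y * y^n := by ring
  have hQ : 1 ≤ y^n := one_le_pow₀ (by linarith)
  nlinarith [h1, hQ]

lemma geom_abs_lt {x : ℤ} (hx : x ≤ -2) {n : ℕ} (hn : 1 ≤ n) :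
    |∑ j ∈ range (n+1), x^j| < (-x)^n := by
  set s := ∑ j ∈ range (n+1), x^j with hs
  have h1 : s * (x - 1) = x^(n+1) - 1 := geom_sum_mul x (n+1)
  have e1 : |s| * (1 - x) = |x^(n+1) - 1| := by
    rw [← h1, abs_mul, abs_of_neg (show x - 1 < 0 by linarith)]; ring
  have e3 : |x^(n+1) - 1| ≤ (-x)^(n+1) + 1 := by
    calc |x^(n+1) - 1| ≤ |x^(n+1)| + |1| := abs_sub _ _
    _ = (-x)^(n+1) + 1 := by
        rw [abs_pow, abs_of_neg (show x < 0 by linarith)]; norm_num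
  have hm : (2:ℤ) ≤ -x := by linarith
  have hmn : (2:ℤ) ≤ (-x)^n := le_trans hm (le_self_pow₀ (by linarith) (by omega))
  have key : |s| * (1 - x) < (-x)^n * (1 - x) := by
    have : (-x)^(n+1) = (-x)^n * (-x) := by ring
    nlinarith [e1, e3]
  exact lt_of_mul_lt_mul_right key (by linarith)

lemma geom_abs_ge3 {x : ℤ} (hx : x ≤ -2) {n : ℕ} (hn : 2 ≤ n) :
    3 ≤ |∑ j ∈ range (n+1), x^j| := by
  set s := ∑ j ∈ range (n+1), x^j with hs
  have h1 : s * (x - 1) = x^(n+1) - 1 := geom_sum_mul x (n+1)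
  have e1 : |s| * (1 - x) = |x^(n+1) - 1| := by
    rw [← h1, abs_mul, abs_of_neg (show x - 1 < 0 by linarith)]; ring
  have e3 : (-x)^(n+1) - 1 ≤ |x^(n+1) - 1| := by
    have : (-x)^(n+1) = |x^(n+1)| := by
      rw [abs_pow, abs_of_neg (show x < 0 by linarith)]
    calc (-x)^(n+1) - 1 = |x^(n+1)| - |(1:ℤ)| := by rw [← this]; norm_num
    _ ≤ |x^(n+1) - 1| := abs_sub_abs_le_abs_sub _ _
  have hm : (2:ℤ) ≤ -x := by linarith
  have hcube : (-x)^3 ≤ (-x)^(n+1) := pow_le_pow_right₀ (by linarith) (by omega)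
  by_contra hcon
  push_neg at hcon
  have habs : |s| ≤ 2 := by omega
  have hmm : 4*(-x) ≤ (-x)^3 := by nlinarith [hm, sq_nonneg (-x-2)]
  have hprod : |s| * (1-x) ≤ 2*(1-x) := mul_le_mul_of_nonneg_right habs (by linarith)
  linarith [e1, e3, hcube, hmm, hprod]

theorem stmt_6 (x y : ℤ) (a b : ℕ) (ha : 1 ≤ a) (hb : 1 ≤ b)
    (hx0 : x ≠ 0) (hxm1 : x ≠ -1) (hy0 : y ≠ 0) (hym1 : y ≠ -1) (hxy : x ≤ y)
    (h : (∑ j ∈ Finset.range (a + 1), x ^ j) * (∑ j ∈ Finset.range (b + 1), y ^ j) =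
      2 * x ^ a * y ^ b) :
    (x = 2 ∧ y = 2 ^ (a + 1) - 1 ∧ b = 1) ∨
    (x = -2 ∧ y = 1 ∧ a = 1 ∧ b = 3) ∨
    (x = -3 ∧ y = 1 ∧ a = 1 ∧ b = 2) := by
  have hycases : y ≤ -2 ∨ y = 1 ∨ 2 ≤ y := by omega
  rcases hycases with hy2 | rfl | hy2
  · -- y ≤ -2, hence x ≤ -2 : no solutions
    exfalso
    have hx2 : x ≤ -2 := by omega
    set s := ∑ j ∈ Finset.range (a + 1), x ^ j with hs
    set t := ∑ j ∈ Finset.range (b + 1), y ^ j with ht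
    have h1 := geom_abs_lt hx2 ha
    have h2 := geom_abs_lt hy2 hb
    rw [← hs] at h1
    rw [← ht] at h2
    have habs : |s| * |t| = 2 * (-x)^a * (-y)^b := by
      rw [← abs_mul, h, abs_mul, abs_mul, abs_pow, abs_pow,
        abs_of_neg (show x < 0 by linarith), abs_of_neg (show y < 0 by linarith)]
      norm_num
    have hA : (2:ℤ) ≤ (-x)^a := le_trans (by linarith) (le_self_pow₀ (by linarith) (by omega))
    have hB : (2:ℤ) ≤ (-y)^b := le_trans (by linarith) (le_self_pow₀ (by linarith) (by omega))
    have hs1 : |s| ≤ (-x)^a - 1 := by omega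
    have ht1 : |t| ≤ (-y)^b - 1 := by omega
    nlinarith [mul_le_mul hs1 ht1 (abs_nonneg t) (by linarith : (0:ℤ) ≤ (-x)^a - 1),
      mul_nonneg (by linarith : (0:ℤ) ≤ (-x)^a) (by linarith : (0:ℤ) ≤ (-y)^b), habs]
  · -- y = 1
    have hxcases : x ≤ -2 ∨ x = 1 := by omega
    have ht1 : (∑ j ∈ Finset.range (b + 1), (1:ℤ) ^ j) = (b:ℤ) + 1 := by simp
    rw [ht1, one_pow, mul_one] at h
    rcases hxcases with hx2 | rfl
    · -- x ≤ -2, y = 1 : sporadic solutions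
      set s := ∑ j ∈ Finset.range (a + 1), x ^ j with hs
      have hdvd : s ∣ 2 * x^a := ⟨(b:ℤ)+1, by linarith [h]⟩
      have hdvd2 : s ∣ 2 := ((coprime_geom x a).pow_right).dvd_of_dvd_mul_right hdvd
      have habs2 : |s| ≤ 2 := Int.le_of_dvd (by norm_num) ((abs_dvd s 2).mpr hdvd2)
      have ha1 : a = 1 := by
        by_contra hcon
        have := geom_abs_ge3 hx2 (show 2 ≤ a by omega)
        rw [← hs] at this
        omega
      subst ha1
      have hs2 : s = 1 + x := by
        rw [hs]
        simp [Finset.sum_range_succ]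
      rw [hs2] at habs2 h
      have hx3 : -3 ≤ x := by
        rcases abs_le.mp habs2 with ⟨h1, h2⟩
        linarith
      interval_cases x
      · -- x = -3
        right; right
        refine ⟨rfl, rfl, rfl, ?_⟩
        norm_num at h
        omega
      · -- x = -2
        right; left
        refine ⟨rfl, rfl, rfl, ?_⟩
        norm_num at h
        omega
    · -- x = 1, y = 1 : impossible
      exfalso
      have hs1 : (∑ j ∈ Finset.range (a + 1), (1:ℤ) ^ j) = (a:ℤ) + 1 := by simp
      rw [hs1, one_pow] at h
      have ha' : (1:ℤ) ≤ (a:ℤ) := by exact_mod_cast ha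
      have hb' : (1:ℤ) ≤ (b:ℤ) := by exact_mod_cast hb
      nlinarith
  · -- 2 ≤ y
    have hxcases : x ≤ -2 ∨ x = 1 ∨ x = 2 ∨ 3 ≤ x := by omega
    rcases hxcases with hx2 | rfl | rfl | hx3
    · -- x ≤ -2, y ≥ 2 : impossible
      exfalso
      set s := ∑ j ∈ Finset.range (a + 1), x ^ j with hs
      set t := ∑ j ∈ Finset.range (b + 1), y ^ j with ht
      have h1 := geom_abs_lt hx2 ha
      rw [← hs] at h1
      have h2 : t < 2 * y^b := geom_ub hy2 b
      have ht3 : 1 + y ≤ t := by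
        rw [ht, geom_sum_succ]
        have := geom_lb (show (0:ℤ) ≤ y by linarith) b hb
        nlinarith
      have habs : |s| * t = 2 * (-x)^a * y^b := by
        have : |s| * |t| = 2 * (-x)^a * y^b := by
          rw [← abs_mul, h, abs_mul, abs_mul, abs_pow, abs_pow,
            abs_of_neg (show x < 0 by linarith), abs_of_pos (show 0 < y by linarith)]
          norm_num
        rwa [abs_of_pos (show 0 < t by linarith)] at this
      have hA : (2:ℤ) ≤ (-x)^a := le_trans (by linarith) (le_self_pow₀ (by linarith) (by omega))
      have hQ : (2:ℤ) ≤ y^b := le_trans hy2 (le_self_pow₀ (by linarith) (by omega))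
      have hs1 : |s| ≤ (-x)^a - 1 := by omega
      have ht2 : t ≤ 2 * y^b - 1 := by omega
      nlinarith [mul_le_mul hs1 ht2 (by linarith : (0:ℤ) ≤ t)
        (by linarith : (0:ℤ) ≤ (-x)^a - 1), habs]
    · -- x = 1, y ≥ 2 : impossible
      exfalso
      have hs1 : (∑ j ∈ Finset.range (a + 1), (1:ℤ) ^ j) = (a:ℤ) + 1 := by simp
      rw [hs1, one_pow] at h
      set t := ∑ j ∈ Finset.range (b + 1), y ^ j with ht
      have hdvd : t ∣ 2 * y^b := by
        rw [show (2:ℤ) * y^b = 2*1*y^b by ring, ← h]; exact dvd_mul_left t _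
      have hdvd2 : t ∣ 2 := ((coprime_geom y b).pow_right).dvd_of_dvd_mul_right hdvd
      have ht3 : 1 + y ≤ t := by
        rw [ht, geom_sum_succ]
        have := geom_lb (show (0:ℤ) ≤ y by linarith) b hb
        nlinarith
      have := Int.le_of_dvd (by norm_num) hdvd2
      linarith
    · -- x = 2 : main family
      left
      have hs2 : (∑ j ∈ Finset.range (a + 1), (2:ℤ) ^ j) = 2^(a+1) - 1 := by
        have := geom_sum_mul (2:ℤ) (a+1)
        simpa using this
      rw [hs2] at h
      obtain ⟨k, rfl⟩ : ∃ k, b = k + 1 := ⟨b - 1, by omega⟩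
      rw [geom_sum_succ' (x := y) (n := k+1)] at h
      set u := ∑ j ∈ Finset.range (k + 1), y ^ j with hu
      have key : ((2:ℤ)^(a+1) - 1) * u = y^(k+1) := by linear_combination h
      have hu1 : 1 ≤ u := geom_lb (by linarith) (k+1) (by omega)
      have hu_dvd : u ∣ y^(k+1) := ⟨2^(a+1) - 1, by rw [← key]; ring⟩
      obtain ⟨p, q, hpq⟩ := (coprime_geom y k).pow_right (n := k+1)
      have hu_one : u ∣ 1 := by
        rw [← hpq]
        exact dvd_add (dvd_mul_left u p) (hu_dvd.mul_left q)
      have hu_eq : u = 1 := by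
        have := Int.le_of_dvd (by norm_num) hu_one
        omega
      have hk : k = 0 := by
        by_contra hcon
        have hk1 : 1 ≤ k := by omega
        have : 1 + y ≤ u := by
          rw [hu, geom_sum_succ]
          have := geom_lb (show (0:ℤ) ≤ y by linarith) k hk1
          nlinarith
        omega
      subst hk
      refine ⟨rfl, ?_, rfl⟩
      rw [hu_eq] at key
      rw [pow_one] at key
      linarith
    · -- 3 ≤ x ≤ y : impossible
      exfalso
      have hy3 : 3 ≤ y := by linarith
      set s := ∑ j ∈ Finset.range (a + 1), x ^ j with hs
      set t := ∑ j ∈ Finset.range (b + 1), y ^ j with ht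
      rcases eq_or_lt_of_le hy3 with hy3e | hy4
      · -- y = 3, hence x = 3
        have hx3e : x = 3 := by omega
        subst hx3e
        have hy3e' : y = 3 := by omega
        subst hy3e'
        have cop3 : IsCoprime (s * t) (3:ℤ) :=
          (coprime_geom 3 a).mul_left (coprime_geom 3 b)
        obtain ⟨a', rfl⟩ : ∃ a', a = a' + 1 := ⟨a - 1, by omega⟩
        have hdvd : (3:ℤ) ∣ s * t := by
          rw [h]; exact ⟨2 * 3^a' * 3^b, by ring⟩
        obtain ⟨p, q, hpq⟩ := cop3
        have : (3:ℤ) ∣ 1 := by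
          rw [← hpq]
          exact dvd_add (hdvd.mul_left p) (dvd_mul_left 3 q)
        norm_num at this
      · -- y ≥ 4
        have hy4' : 4 ≤ y := by omega
        have hsm : s * (x - 1) = x^(a+1) - 1 := geom_sum_mul x (a+1)
        have htm : t * (y - 1) = y^(b+1) - 1 := geom_sum_mul y (b+1)
        have E : (x * x^a - 1) * (y * y^b - 1) = 2 * x^a * y^b * ((x-1)*(y-1)) := by
          have e1 : x^(a+1) = x * x^a := by ring
          have e2 : y^(b+1) = y * y^b := by ring
          calc (x * x^a - 1) * (y * y^b - 1) = (s*(x-1)) * (t*(y-1)) := by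
                rw [hsm, htm, e1, e2]
          _ = (s*t) * ((x-1)*(y-1)) := by ring
          _ = 2 * x^a * y^b * ((x-1)*(y-1)) := by rw [h]
        have hP : 3 ≤ x^a := le_trans hx3 (le_self_pow₀ (by linarith) (by omega))
        have hQ : 4 ≤ y^b := le_trans hy4' (le_self_pow₀ (by linarith) (by omega))
        have h22 : 2 ≤ (x-2)*(y-2) := by nlinarith
        have hnn : 0 ≤ (x^a * y^b) * ((x-2)*(y-2) - 2) :=
          mul_nonneg (mul_nonneg (by linarith) (by linarith)) (by linarith)
        have hxP : 9 ≤ x * x^a := by nlinarith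
        have hyQ : 16 ≤ y * y^b := by nlinarith
        nlinarith [E, hnn, hxP, hyQ]
end

section
/- In any nontrivial, odd, spoof perfect factorization, exactly one of the exponents is odd. -/
lemma aux_cast_odd (x : ℤ) (hx : Odd x) : ((x : ZMod 2) = 1) := by
  obtain ⟨k, rfl⟩ := hx
  push_cast
  rw [show (2 : ZMod 2) = 0 from rfl]
  ring

lemma aux_factor (x : ℤ) (hx : Odd x) (a : ℕ) :
    (Odd a → (2:ℤ) ∣ ∑ j ∈ Finset.range (a+1), x ^ j) ∧
    (¬ Odd a → Odd (∑ j ∈ Finset.range (a+1), x ^ j)) := by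
  have hcast : ((∑ j ∈ Finset.range (a+1), x ^ j : ℤ) : ZMod 2) = ((a+1 : ℕ) : ZMod 2) := by
    push_cast
    rw [aux_cast_odd x hx]
    simp
  constructor
  · intro ha
    rw [show (2:ℤ) = ((2:ℕ):ℤ) from rfl, ← ZMod.intCast_zmod_eq_zero_iff_dvd, hcast,
      ZMod.natCast_eq_zero_iff]
    rw [Nat.odd_iff] at ha; omega
  · intro ha
    rw [Int.not_even_iff_odd.symm, even_iff_two_dvd, show (2:ℤ) = ((2:ℕ):ℤ) from rfl,
      ← ZMod.intCast_zmod_eq_zero_iff_dvd, hcast]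
    rw [show (¬((a+1:ℕ):ZMod 2) = 0) ↔ ¬(2 ∣ (a+1)) from
      not_congr (ZMod.natCast_eq_zero_iff _ _)]
    rw [Nat.odd_iff] at ha; omega

lemma aux_key (l : List (ℤ × ℕ)) (hodd : ∀ p ∈ l, Odd p.1) :
    (2:ℤ)^((l.filter fun p => Odd p.2).length) ∣
      (l.map fun p => ∑ j ∈ Finset.range (p.2+1), p.1 ^ j).prod ∧
    ((l.filter fun p => Odd p.2).length = 0 →
      Odd (l.map fun p => ∑ j ∈ Finset.range (p.2+1), p.1 ^ j).prod) := by
  induction l with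
  | nil => simp
  | cons p l ih =>
    obtain ⟨ih1, ih2⟩ := ih (fun q hq => hodd q (List.mem_cons_of_mem p hq))
    have hp := hodd p (List.mem_cons_self)
    obtain ⟨h1, h2⟩ := aux_factor p.1 hp p.2
    by_cases ho : Odd p.2
    · constructor
      · simp only [List.filter_cons, ho, List.length_cons, List.map_cons, List.prod_cons,
          decide_eq_true_eq, if_true, decide_true]
        rw [show ((2:ℤ)^((List.filter (fun p => decide (Odd p.2)) l).length + 1))
          = 2 * 2^((List.filter (fun p => decide (Odd p.2)) l).length) by ring]
        exact mul_dvd_mul (h1 ho) ih1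
      · simp [List.filter_cons, ho]
    · constructor
      · simp only [List.filter_cons, ho, List.map_cons, List.prod_cons, decide_eq_true_eq,
          if_false]
        exact Dvd.dvd.mul_left ih1 _
      · simp only [List.filter_cons, ho, List.map_cons, List.prod_cons, decide_eq_true_eq,
          if_false]
        intro h0
        exact (h2 ho).mul (ih2 h0)

lemma aux_odd_prod (l : List ℤ) (h : ∀ x ∈ l, Odd x) : Odd l.prod := by
  induction l with
  | nil => simp
  | cons x l ih =>
    rw [List.prod_cons]
    exact (h x (List.mem_cons_self)).mul (ih fun y hy => h y (List.mem_cons_of_mem x hy))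

theorem stmt_7 (l : List (ℤ × ℕ))
    (hnt : ∀ p ∈ l, p.1 ≠ 0 ∧ p.1 ≠ -1)
    (hexp : ∀ p ∈ l, 1 ≤ p.2)
    (hodd : ∀ p ∈ l, Odd p.1)
    (hperf : (l.map fun p => ∑ j ∈ Finset.range (p.2 + 1), p.1 ^ j).prod =
      2 * (l.map fun p => p.1 ^ p.2).prod) :
    (l.filter fun p => Odd p.2).length = 1 := by
  obtain ⟨hdvd, hzero⟩ := aux_key l hodd
  have hm : Odd (l.map fun p => p.1 ^ p.2).prod := by
    apply aux_odd_prod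
    intro x hx
    simp only [List.mem_map] at hx
    obtain ⟨p, hp, rfl⟩ := hx
    exact (hodd p hp).pow
  set k := (l.filter fun p => Odd p.2).length with hk
  rcases k with _ | _ | k
  · exfalso
    have := hzero rfl
    rw [hperf, Int.odd_iff] at this
    obtain ⟨c, hc⟩ := hm
    omega
  · rfl
  · exfalso
    rw [hperf] at hdvd
    have h4 : (4:ℤ) ∣ 2 * (l.map fun p => p.1 ^ p.2).prod := by
      refine dvd_trans ?_ hdvd
      have : (2:ℤ)^2 ∣ 2^(k+1+1) := pow_dvd_pow 2 (by omega)
      simpa using this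
    obtain ⟨c, hc⟩ := h4
    obtain ⟨d, hd⟩ := hm
    omega
end

section
/- If ∏_i x_i^{a_i} is a nontrivial, odd, spoof perfect factorization and x is the unique base with odd exponent a, then x ≡ 1 (mod 4) and a ≡ 1 (mod 4). -/
private lemma odd_list_prod (L : List ℤ) (h : ∀ y ∈ L, Odd y) : Odd L.prod := by
  induction L with
  | nil => simp
  | cons hd tl ih =>
    simp only [List.prod_cons]
    exact (h hd (by simp)).mul (ih fun y hy => h y (List.mem_cons_of_mem _ hy))

theorem stmt_8 (l : List (ℤ × ℕ))
    (hnt : ∀ p ∈ l, p.1 ≠ 0 ∧ p.1 ≠ -1)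
    (hexp : ∀ p ∈ l, 1 ≤ p.2)
    (hodd : ∀ p ∈ l, Odd p.1)
    (hperf : (l.map fun p => ∑ j ∈ Finset.range (p.2 + 1), p.1 ^ j).prod =
      2 * (l.map fun p => p.1 ^ p.2).prod)
    (x : ℤ) (a : ℕ) (hmem : (x, a) ∈ l) (haodd : Odd a) :
    x % 4 = 1 ∧ a % 4 = 1 := by
  obtain ⟨t, ht⟩ := hodd (x, a) hmem
  obtain ⟨m, hm⟩ := haodd
  have hoddQ : Odd (l.map fun p => p.1 ^ p.2).prod := by
    apply odd_list_prod
    intro y hy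
    simp only [List.mem_map] at hy
    obtain ⟨p, hp, rfl⟩ := hy
    exact (hodd p hp).pow
  obtain ⟨k, hk⟩ := hoddQ
  rw [hk] at hperf
  obtain ⟨l1, l2, rfl⟩ := List.append_of_mem hmem
  simp only [List.map_append, List.map_cons, List.prod_append, List.prod_cons] at hperf
  have h4 := congrArg (fun z : ℤ => (z : ZMod 4)) hperf
  push_cast at h4
  have hx4 : x % 4 = 1 ∨ x % 4 = 3 := by omega
  rcases hx4 with hx1 | hx3
  · have hxz : (x : ZMod 4) = 1 := by
      have := (ZMod.intCast_eq_intCast_iff' x 1 4).mpr (by omega)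
      simpa using this
    rw [hxz] at h4
    simp only [one_pow, Finset.sum_const, Finset.card_range, nsmul_eq_mul, mul_one] at h4
    have ha1 : ((a + 1 : ℕ) : ZMod 4) = 2 * ((m : ZMod 4) + 1) := by
      rw [hm]; push_cast; ring
    rw [ha1] at h4
    have key : ∀ u v c w : ZMod 4, u * (2 * c * v) = 2 * (2 * w + 1) → 2 * c = 2 := by
      decide
    have h2 : 2 * ((m : ZMod 4) + 1) = 2 := key _ _ _ _ h4
    have hmn : ((2 * m + 2 : ℕ) : ZMod 4) = ((2 : ℕ) : ZMod 4) := by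
      push_cast; rw [mul_add, mul_one] at h2; linear_combination h2
    have := (ZMod.natCast_eq_natCast_iff _ _ _).mp hmn
    unfold Nat.ModEq at this
    constructor
    · exact hx1
    · omega
  · have hxz : (x : ZMod 4) = -1 := by
      have := (ZMod.intCast_eq_intCast_iff' x (-1) 4).mpr (by omega)
      simpa using this
    rw [hxz] at h4
    rw [neg_one_geom_sum, if_pos ⟨m + 1, by omega⟩] at h4
    have key : ∀ u v w : ZMod 4, u * (0 * v) ≠ 2 * (2 * w + 1) := by decide
    exact absurd h4 (key _ _ _)
end

section
/- For an odd integer x and positive integer a, the 2-adic valuation of σ̃₋₁(x^a) = ∑_{j=0}^{a} x^{-j} ∈ ℚ equals 1 if and only if x ≡ 1 (mod 4) and a ≡ 1 (mod 4). -/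
private lemma pow4_one (x : ℤ) (h : x % 4 = 1) (n : ℕ) : x ^ n % 4 = 1 := by
  induction n with
  | zero => norm_num
  | succ n ih => rw [pow_succ, Int.mul_emod, ih, h]; norm_num

private lemma pow4_three (x : ℤ) (h : x % 4 = 3) (n : ℕ) :
    x ^ n % 4 = if n % 2 = 0 then 1 else 3 := by
  induction n with
  | zero => norm_num
  | succ n ih =>
    rw [pow_succ, Int.mul_emod, ih, h]
    rcases Nat.even_or_odd n with he | ho
    · have h0 : n % 2 = 0 := Nat.even_iff.mp he
      have h2 : (n + 1) % 2 = 1 := by omega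
      simp [h0, h2]
    · have h0 : n % 2 = 1 := Nat.odd_iff.mp ho
      have h2 : (n + 1) % 2 = 0 := by omega
      simp [h0, h2]

private lemma sumA (x : ℤ) (h : x % 4 = 1) (n : ℕ) :
    (∑ j ∈ Finset.range n, x ^ j) % 4 = (n : ℤ) % 4 := by
  induction n with
  | zero => simp
  | succ n ih =>
    rw [Finset.sum_range_succ]
    have := pow4_one x h n
    push_cast
    omega

private lemma sumB (x : ℤ) (h : x % 4 = 3) (n : ℕ) :
    (∑ j ∈ Finset.range n, x ^ j) % 4 = if n % 2 = 0 then 0 else 1 := by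
  induction n with
  | zero => simp
  | succ n ih =>
    rw [Finset.sum_range_succ]
    have hp := pow4_three x h n
    rcases Nat.even_or_odd n with he | ho
    · have h0 : n % 2 = 0 := Nat.even_iff.mp he
      have h2 : (n + 1) % 2 = 1 := by omega
      simp only [h0, h2, if_true, if_false, if_pos rfl] at *
      norm_num at *
      omega
    · have h0 : n % 2 = 1 := Nat.odd_iff.mp ho
      have h2 : (n + 1) % 2 = 0 := by omega
      simp only [h0, h2] at *
      norm_num at *
      omega

private lemma val_eq_one_iff (S : ℤ) : padicValRat 2 (S : ℚ) = 1 ↔ S % 4 = 2 := by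
  constructor
  · intro h
    rcases eq_or_ne S 0 with rfl | hS
    · simp [padicValRat] at h
    rw [padicValRat.of_int] at h
    unfold padicValInt at h
    have hna : S.natAbs ≠ 0 := by simpa using hS
    have h1 : 2 ^ padicValNat 2 S.natAbs ∣ S.natAbs := pow_padicValNat_dvd
    have h2 : ¬ 2 ^ (padicValNat 2 S.natAbs + 1) ∣ S.natAbs :=
      pow_succ_padicValNat_not_dvd hna
    have h' : padicValNat 2 S.natAbs = 1 := by exact_mod_cast h
    rw [h'] at h1 h2
    norm_num at h1 h2
    omega
  · intro h
    obtain ⟨t, ht⟩ : ∃ t, S = 2 * t := ⟨S / 2, by omega⟩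
    have hodd : ¬ (2:ℤ) ∣ t := by omega
    have ht0 : t ≠ 0 := by rintro rfl; simp at hodd
    have hrw : (S : ℚ) = 2 * (t : ℚ) := by rw [ht]; push_cast; ring
    have h2v : padicValRat 2 (2 : ℚ) = 1 := by
      simpa using padicValRat.self (p := 2) one_lt_two
    rw [hrw, padicValRat.mul (by norm_num) (by exact_mod_cast ht0), h2v,
      padicValRat.of_int, padicValInt.eq_zero_of_not_dvd (by exact_mod_cast hodd)]
    simp

theorem stmt_9 (x : ℤ) (hx : Odd x) (a : ℕ) (ha : 1 ≤ a) :
    padicValRat 2 (∑ j ∈ Finset.range (a + 1), (1 / (x : ℚ)) ^ j) = 1 ↔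
      x % 4 = 1 ∧ a % 4 = 1 := by
  have hx2 : x % 2 = 1 := Int.odd_iff.mp hx
  have hxz : x ≠ 0 := by omega
  have hx0 : (x : ℚ) ≠ 0 := Int.cast_ne_zero.mpr hxz
  set S : ℤ := ∑ j ∈ Finset.range (a + 1), x ^ j with hSdef
  have key : (∑ j ∈ Finset.range (a + 1), (1 / (x : ℚ)) ^ j) * (x : ℚ) ^ a = (S : ℚ) := by
    rw [hSdef]
    push_cast
    rw [Finset.sum_mul, ← Finset.sum_range_reflect (fun j => (x : ℚ) ^ j) (a + 1)]
    apply Finset.sum_congr rfl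
    intro j hj
    have hj' : j ≤ a := by simpa [Nat.lt_succ_iff] using hj
    field_simp
    rw [show a + 1 - 1 - j = a - j by omega, pow_sub₀ _ hx0 hj', one_div, inv_pow]
    ring
  have hverdict : padicValRat 2 (∑ j ∈ Finset.range (a + 1), (1 / (x : ℚ)) ^ j) = 1
      ↔ S % 4 = 2 := by
    rcases eq_or_ne S 0 with h0 | h0
    · have hsum : (∑ j ∈ Finset.range (a + 1), (1 / (x : ℚ)) ^ j) = 0 := by
        have hz : (∑ j ∈ Finset.range (a + 1), (1 / (x : ℚ)) ^ j) * (x : ℚ) ^ a = 0 := by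
          rw [key, h0]; simp
        exact (mul_eq_zero.mp hz).resolve_right (pow_ne_zero _ hx0)
      rw [hsum, h0]
      simp [padicValRat]
    · have hsum0 : (∑ j ∈ Finset.range (a + 1), (1 / (x : ℚ)) ^ j) ≠ 0 := by
        intro h
        apply h0
        have : (S : ℚ) = 0 := by rw [← key, h, zero_mul]
        exact_mod_cast this
      have hxa : padicValRat 2 ((x : ℚ) ^ a) = 0 := by
        have hcast : ((x ^ a : ℤ) : ℚ) = (x : ℚ) ^ a := by push_cast; ring
        have hoddp : ¬ (2:ℤ) ∣ x ^ a := by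
          have := Int.odd_iff.mp (hx.pow (n := a))
          omega
        rw [← hcast, padicValRat.of_int, padicValInt.eq_zero_of_not_dvd hoddp]
        simp
      have hmul := padicValRat.mul (p := 2) hsum0 (pow_ne_zero a hx0)
      rw [key, hxa, add_zero] at hmul
      rw [← val_eq_one_iff S, hmul]
  rw [hverdict, hSdef]
  rcases (by omega : x % 4 = 1 ∨ x % 4 = 3) with h | h
  · rw [sumA x h]
    push_cast
    omega
  · rw [sumB x h]
    split_ifs <;> constructor <;> intro hh <;> omega
end

section
/- There is no spoof perfect factorization of the form (-3)^a · (-2)^b · 1^3 with a ≥ 2 and b ≥ 4. -/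
theorem stmt_12 :
    ¬ ∃ (a b : ℕ), 2 ≤ a ∧ 4 ≤ b ∧
      (∑ j ∈ Finset.range (a + 1), (-3 : ℤ) ^ j) *
        (∑ j ∈ Finset.range (b + 1), (-2 : ℤ) ^ j) * 4 =
      2 * (-3 : ℤ) ^ a * (-2 : ℤ) ^ b := by
  rintro ⟨a, b, ha, hb, h⟩
  have g1 := geom_sum_mul (-3 : ℤ) (a + 1)
  have g2 := geom_sum_mul (-2 : ℤ) (b + 1)
  have key : (-3 : ℤ) ^ (a + 1) + (-2 : ℤ) ^ (b + 1) = 1 := by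
    linear_combination ((-2 : ℤ) ^ (b + 1) - 1) * g1 +
      (-4 * (∑ j ∈ Finset.range (a + 1), (-3 : ℤ) ^ j)) * g2 - 3 * h
  obtain ⟨c, rfl⟩ : ∃ c, a = c + 2 := ⟨a - 2, by omega⟩
  -- reduce mod 27 : (-2)^(b+1) = 1
  have k27 : ((-2 : ZMod 27)) ^ (b + 1) = 1 := by
    have hc := congrArg (fun z : ℤ => (z : ZMod 27)) key
    push_cast at hc
    rwa [show c + 2 + 1 = c + 3 by ring, pow_add,
      show ((-3 : ZMod 27)) ^ 3 = 0 by decide, mul_zero, zero_add] at hc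
  -- deduce 9 ∣ b + 1
  have h9 : 9 ∣ b + 1 := by
    have hr : (-2 : ZMod 27) ^ ((b + 1) % 9) = 1 := by
      conv at k27 => rw [← Nat.div_add_mod (b + 1) 9]
      rwa [pow_add, pow_mul, show ((-2 : ZMod 27)) ^ 9 = 1 by decide, one_pow,
        one_mul] at k27
    have hlt : (b + 1) % 9 < 9 := Nat.mod_lt _ (by norm_num)
    have hmod : (b + 1) % 9 = 0 := by
      set r := (b + 1) % 9 with hrdef
      interval_cases r <;> revert hr <;> decide
    exact Nat.dvd_of_mod_eq_zero hmod
  obtain ⟨q, hq⟩ := h9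
  -- reduce mod 19
  have e9 : ((-2 : ZMod 19)) ^ 9 = 1 := by decide
  have e3 : (-3 : ZMod 19) ≠ 0 := by decide
  haveI : Fact (Nat.Prime 19) := ⟨by norm_num⟩
  have k19 : ((-3 : ZMod 19)) ^ (c + 2 + 1) = 0 := by
    have hc := congrArg (fun z : ℤ => (z : ZMod 19)) key
    push_cast at hc
    rw [hq, pow_mul, e9, one_pow] at hc
    linear_combination hc
  exact pow_ne_zero _ e3 k19
end

section
/- For every positive integer n, the factorization (-2)^{2n-1} · 1^2 · (2^{2n} - 1)^1 is spoof perfect: (∑_{j=0}^{2n-1} (-2)^j) · 3 · 2^{2n} = 2 · (-2)^{2n-1} · (2^{2n} - 1). -/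
theorem stmt_18 (n : ℕ) (hn : 1 ≤ n) :
    (∑ j ∈ Finset.range (2 * n - 1 + 1), (-2 : ℤ) ^ j) * 3 * 2 ^ (2 * n) =
      2 * (-2 : ℤ) ^ (2 * n - 1) * (2 ^ (2 * n) - 1) := by
  obtain ⟨k, rfl⟩ := Nat.exists_eq_add_of_le hn
  have e1 : 2 * (1 + k) - 1 = 2 * k + 1 := by omega
  have e2 : 2 * (1 + k) = 2 * k + 2 := by ring
  rw [e1, e2]
  have h := geom_sum_mul (-2 : ℤ) (2 * k + 2)
  have hs : (∑ j ∈ Finset.range (2 * k + 1 + 1), (-2 : ℤ) ^ j) * 3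
      = 1 - 2 ^ (2 * k + 2) := by
    have : (2 * k + 1 + 1) = 2 * k + 2 := rfl
    rw [this]
    have h2 : ((-2 : ℤ)) ^ (2 * k + 2) = 2 ^ (2 * k + 2) := by
      rw [neg_pow]; simp [pow_add, pow_mul]
    linarith [h, h2 ▸ h]
  calc (∑ j ∈ Finset.range (2 * k + 1 + 1), (-2 : ℤ) ^ j) * 3 * 2 ^ (2 * k + 2)
      = (1 - 2 ^ (2 * k + 2)) * 2 ^ (2 * k + 2) := by rw [hs]
    _ = 2 * (-2 : ℤ) ^ (2 * k + 1) * (2 ^ (2 * k + 2) - 1) := by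
        have h2 : ((-2 : ℤ)) ^ (2 * k + 1) = -(2 ^ (2 * k + 1)) := by
          rw [neg_pow]; simp [pow_add, pow_mul]
        rw [h2]; ring
end

section
/- For all positive integers n and m, the factorization 2^n · (2^{n+1})^m · (2^{(n+1)(m+1)} - 1)^1 is spoof perfect: (2^{n+1} - 1) · (∑_{j=0}^{m} 2^{(n+1)j}) · 2^{(n+1)(m+1)} = 2 · 2^n · 2^{(n+1)m} · (2^{(n+1)(m+1)} - 1). -/
theorem stmt_19 (n m : ℕ) (hn : 1 ≤ n) (hm : 1 ≤ m) :
    ((2 : ℤ) ^ (n + 1) - 1) * (∑ j ∈ Finset.range (m + 1), (2 : ℤ) ^ ((n + 1) * j)) *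
        2 ^ ((n + 1) * (m + 1)) =
      2 * 2 ^ n * 2 ^ ((n + 1) * m) * (2 ^ ((n + 1) * (m + 1)) - 1) := by
  have h : ((2 : ℤ) ^ (n + 1) - 1) * (∑ j ∈ Finset.range (m + 1), (2 : ℤ) ^ ((n + 1) * j))
      = 2 ^ ((n + 1) * (m + 1)) - 1 := by
    simp_rw [pow_mul]
    rw [mul_comm, geom_sum_mul]
  rw [h]
  have h2 : (2 : ℤ) * 2 ^ n * 2 ^ ((n + 1) * m) = 2 ^ ((n + 1) * (m + 1)) := by
    rw [← pow_succ', ← pow_add]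
    ring_nf
  rw [h2]
  ring
end
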